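/- arXiv:hep-ph/9409405 — 3 statements merged into one kernel-verified Lean document; each statement's English description precedes it below -/
import Mathlib

section
/- For every positive integer n, the alternating binomial sum with squared denominators satisfies ∑_{l=1}^{n} C(n,l) (-1)^{l+1} / l² = (1/2) ∑_{l=1}^{n-1} 1/l² + (1/n) ∑_{l=1}^{n} 1/l + (1/2) (∑_{l=1}^{n-1} 1/l)², where C(n,l) is the binomial coefficient and empty sums are zero. -/
open Finset

lemma key (n l : ℕ) (hl : 1 ≤ l) :
    ((n : ℝ) + 1) * (n.choose (l - 1) : ℝ) = ((n + 1).choose l : ℝ) * (l : ℝ) := by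
  have h := Nat.add_one_mul_choose_eq n (l - 1)
  have hl' : l - 1 + 1 = l := by omega
  rw [hl'] at h
  exact_mod_cast h

lemma range_eq (n : ℕ) : Finset.range (n + 1) = insert 0 (Finset.Icc 1 n) := by
  ext x; simp [Nat.lt_succ_iff]; omega

lemma alt_sum (n : ℕ) (hn : 1 ≤ n) :
    ∑ l ∈ Finset.Icc 1 n, (n.choose l : ℝ) * (-1 : ℝ) ^ (l + 1) = 1 := by
  have h := Int.alternating_sum_range_choose_of_ne (n := n) (by omega)
  have h2 : ∑ i ∈ Finset.range (n + 1), (-1 : ℝ) ^ i * (n.choose i : ℝ) = 0 := by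
    exact_mod_cast congrArg (Int.cast : ℤ → ℝ) h
  rw [range_eq, Finset.sum_insert (by simp)] at h2
  simp only [pow_succ]
  have : ∑ l ∈ Finset.Icc 1 n, (n.choose l : ℝ) * ((-1:ℝ) ^ l * -1)
      = - ∑ l ∈ Finset.Icc 1 n, (-1:ℝ) ^ l * (n.choose l : ℝ) := by
    rw [← Finset.sum_neg_distrib]; apply Finset.sum_congr rfl; intros; ring
  rw [this]; simp at h2; linarith

lemma lemA (n : ℕ) (hn : 1 ≤ n) :
    ∑ l ∈ Finset.Icc 1 n, (n.choose l : ℝ) * (-1 : ℝ) ^ (l + 1) / (l : ℝ)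
      = ∑ l ∈ Finset.Icc 1 n, 1 / (l : ℝ) := by
  induction n, hn using Nat.le_induction with
  | base => simp
  | succ n hn ih =>
    have hsplit : ∀ l ∈ Finset.Icc 1 (n + 1),
        ((n + 1).choose l : ℝ) * (-1 : ℝ) ^ (l + 1) / (l : ℝ)
          = (n.choose l : ℝ) * (-1 : ℝ) ^ (l + 1) / (l : ℝ)
            + (n.choose (l - 1) : ℝ) * (-1 : ℝ) ^ (l + 1) / (l : ℝ) := by
      intro l hl
      simp only [Finset.mem_Icc] at hl
      obtain ⟨m, rfl⟩ : ∃ m, l = m + 1 := ⟨l - 1, by omega⟩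
      rw [Nat.choose_succ_succ]
      push_cast
      ring
    rw [Finset.sum_congr rfl hsplit, Finset.sum_add_distrib]
    have h1 : ∑ l ∈ Finset.Icc 1 (n + 1), (n.choose l : ℝ) * (-1 : ℝ) ^ (l + 1) / (l : ℝ)
        = ∑ l ∈ Finset.Icc 1 n, (n.choose l : ℝ) * (-1 : ℝ) ^ (l + 1) / (l : ℝ) := by
      rw [Finset.sum_Icc_succ_top (by omega)]
      simp [Nat.choose_eq_zero_of_lt (by omega : n < n + 1)]
    have h2 : ∀ l ∈ Finset.Icc 1 (n + 1),
        (n.choose (l - 1) : ℝ) * (-1 : ℝ) ^ (l + 1) / (l : ℝ)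
          = ((n + 1).choose l : ℝ) * (-1 : ℝ) ^ (l + 1) / ((n : ℝ) + 1) := by
      intro l hl
      simp only [Finset.mem_Icc] at hl
      have hk := key n l hl.1
      have hl0 : (l : ℝ) ≠ 0 := by
        have : 0 < l := hl.1
        positivity
      have hn0 : (n : ℝ) + 1 ≠ 0 := by positivity
      field_simp
      linear_combination hk
    rw [Finset.sum_congr rfl h2, ← Finset.sum_div]
    have h3 : ∑ l ∈ Finset.Icc 1 (n + 1), ((n + 1).choose l : ℝ) * (-1 : ℝ) ^ (l + 1) = 1 := by
      have := alt_sum (n + 1) (by omega)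
      push_cast at this ⊢
      exact this
    rw [h3, h1, ih, Finset.sum_Icc_succ_top (by omega : 1 ≤ n + 1)]
    push_cast
    ring

lemma lemB (n : ℕ) (hn : 1 ≤ n) :
    ∑ l ∈ Finset.Icc 1 n, (n.choose l : ℝ) * (-1 : ℝ) ^ (l + 1) / (l : ℝ) ^ 2
      = (1 / 2) * (∑ l ∈ Finset.Icc 1 n, 1 / (l : ℝ)) ^ 2
        + (1 / 2) * ∑ l ∈ Finset.Icc 1 n, 1 / (l : ℝ) ^ 2 := by
  induction n, hn using Nat.le_induction with
  | base => norm_num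
  | succ n hn ih =>
    have hsplit : ∀ l ∈ Finset.Icc 1 (n + 1),
        ((n + 1).choose l : ℝ) * (-1 : ℝ) ^ (l + 1) / (l : ℝ) ^ 2
          = (n.choose l : ℝ) * (-1 : ℝ) ^ (l + 1) / (l : ℝ) ^ 2
            + (n.choose (l - 1) : ℝ) * (-1 : ℝ) ^ (l + 1) / (l : ℝ) ^ 2 := by
      intro l hl
      simp only [Finset.mem_Icc] at hl
      obtain ⟨m, rfl⟩ : ∃ m, l = m + 1 := ⟨l - 1, by omega⟩
      rw [Nat.choose_succ_succ]
      push_cast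
      ring
    rw [Finset.sum_congr rfl hsplit, Finset.sum_add_distrib]
    have h1 : ∑ l ∈ Finset.Icc 1 (n + 1), (n.choose l : ℝ) * (-1 : ℝ) ^ (l + 1) / (l : ℝ) ^ 2
        = ∑ l ∈ Finset.Icc 1 n, (n.choose l : ℝ) * (-1 : ℝ) ^ (l + 1) / (l : ℝ) ^ 2 := by
      rw [Finset.sum_Icc_succ_top (by omega)]
      simp [Nat.choose_eq_zero_of_lt (by omega : n < n + 1)]
    have h2 : ∀ l ∈ Finset.Icc 1 (n + 1),
        (n.choose (l - 1) : ℝ) * (-1 : ℝ) ^ (l + 1) / (l : ℝ) ^ 2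
          = ((n + 1).choose l : ℝ) * (-1 : ℝ) ^ (l + 1) / (l : ℝ) / ((n : ℝ) + 1) := by
      intro l hl
      simp only [Finset.mem_Icc] at hl
      have hk := key n l hl.1
      have hl0 : (l : ℝ) ≠ 0 := by
        have : 0 < l := hl.1
        positivity
      have hn0 : (n : ℝ) + 1 ≠ 0 := by positivity
      field_simp
      linear_combination hk
    rw [Finset.sum_congr rfl h2, ← Finset.sum_div]
    have h3 := lemA (n + 1) (by omega)
    push_cast at h3
    rw [h3, h1, ih]
    rw [Finset.sum_Icc_succ_top (by omega : 1 ≤ n + 1) (fun l => 1 / (l : ℝ)),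
        Finset.sum_Icc_succ_top (by omega : 1 ≤ n + 1) (fun l => 1 / (l : ℝ) ^ 2)]
    push_cast
    have hn0 : ((n : ℝ) + 1) ≠ 0 := by positivity
    field_simp
    ring

/-- For every positive integer `n`,
`∑_{l=1}^{n} C(n,l) (-1)^{l+1} / l²
  = (1/2) ∑_{l=1}^{n-1} 1/l² + (1/n) ∑_{l=1}^{n} 1/l + (1/2) (∑_{l=1}^{n-1} 1/l)²`,
as an identity of real numbers (empty sums are zero). -/
theorem alternating_binomial_sum_squared_denominators (n : ℕ) (hn : 1 ≤ n) :
    ∑ l ∈ Finset.Icc 1 n, (n.choose l : ℝ) * (-1 : ℝ) ^ (l + 1) / (l : ℝ) ^ 2 =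
      (1 / 2) * ∑ l ∈ Finset.Icc 1 (n - 1), 1 / (l : ℝ) ^ 2
        + (1 / (n : ℝ)) * ∑ l ∈ Finset.Icc 1 n, 1 / (l : ℝ)
        + (1 / 2) * (∑ l ∈ Finset.Icc 1 (n - 1), 1 / (l : ℝ)) ^ 2 := by
  obtain ⟨m, rfl⟩ : ∃ m, n = m + 1 := ⟨n - 1, by omega⟩
  rw [lemB (m + 1) (by omega)]
  simp only [Nat.add_sub_cancel]
  rw [Finset.sum_Icc_succ_top (by omega : 1 ≤ m + 1) (fun l => 1 / (l : ℝ)),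
      Finset.sum_Icc_succ_top (by omega : 1 ≤ m + 1) (fun l => 1 / (l : ℝ) ^ 2)]
  push_cast
  have hn0 : ((m : ℝ) + 1) ≠ 0 := by positivity
  field_simp
  ring
end

section
/- Let p₁, p₂ ∈ ℝ⁴ be lightlike with respect to the Minkowski form (η(p₁,p₁) = 0 = η(p₂,p₂)) and satisfy η(p₁,p₂) > 0, so that Q = p₁ − p₂ is spacelike and nonzero. Then there exists a lightlike vector Δ ∈ ℝ⁴ (η(Δ,Δ) = 0) such that η(Δ, Q) = 0, i.e. η(Δ,p₁) = η(Δ,p₂), and moreover η(Δ,p₁) ≠ 0. -/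
/-- The Minkowski bilinear form on `ℝ⁴`:
`η(x,y) = x₀y₀ − x₁y₁ − x₂y₂ − x₃y₃`. -/
def minkowski (x y : Fin 4 → ℝ) : ℝ :=
  x 0 * y 0 - x 1 * y 1 - x 2 * y 2 - x 3 * y 3

lemma helper (p₁ p₂ n : Fin 4 → ℝ) (a b m L : ℝ)
    (h₁ : minkowski p₁ p₁ = 0) (h₂ : minkowski p₂ p₂ = 0)
    (hm : minkowski p₁ p₂ = m)
    (ha : minkowski n p₁ = -a) (hb : minkowski n p₂ = -b)
    (hn : minkowski n n = -1)
    (hL : L ^ 2 * (m + 2 * a * b) = 2 * m ^ 2) (hm0 : 0 < m) :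
    ∃ Δ : Fin 4 → ℝ, minkowski Δ Δ = 0 ∧ minkowski Δ (p₁ - p₂) = 0 ∧
      minkowski Δ p₁ ≠ 0 := by
  refine ⟨fun j => m * (p₁ j + p₂ j) + L * (m * n j + b * p₁ j + a * p₂ j), ?_, ?_, ?_⟩
  · simp only [minkowski] at h₁ h₂ hm ha hb hn ⊢
    linear_combination (m ^ 2 + 2 * m * L * b + L ^ 2 * b ^ 2) * h₁ +
      (m ^ 2 + 2 * m * L * a + L ^ 2 * a ^ 2) * h₂ +
      (2 * m ^ 2 * L + 2 * m * b * L ^ 2) * ha +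
      (2 * m ^ 2 * L + 2 * m * a * L ^ 2) * hb +
      (m ^ 2 * L ^ 2) * hn +
      (2 * m ^ 2 + 2 * m * L * (a + b) + 2 * a * b * L ^ 2) * hm - m * hL
  · simp only [minkowski, Pi.sub_apply] at h₁ h₂ hm ha hb hn ⊢
    linear_combination (m + L * b) * h₁ + (-m - L * a) * h₂ + (m * L) * ha +
      (-(m * L)) * hb + (L * (a - b)) * hm
  · have key : minkowski (fun j => m * (p₁ j + p₂ j) +
        L * (m * n j + b * p₁ j + a * p₂ j)) p₁ = m ^ 2 := by
      simp only [minkowski] at h₁ hm ha ⊢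
      linear_combination (m + L * b) * h₁ + (m * L) * ha + (m + L * a) * hm
    rw [key]
    positivity

/-- If `p₁, p₂ ∈ ℝ⁴` are lightlike with `η(p₁,p₂) > 0` (so that
`Q = p₁ − p₂` is spacelike and nonzero), then there exists a lightlike vector `Δ`
with `η(Δ, p₁ − p₂) = 0` (i.e. `η(Δ,p₁) = η(Δ,p₂)`) and `η(Δ,p₁) ≠ 0`. -/
theorem exists_lightlike_orthogonal_to_difference (p₁ p₂ : Fin 4 → ℝ)
    (h₁ : minkowski p₁ p₁ = 0) (h₂ : minkowski p₂ p₂ = 0)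
    (h₁₂ : 0 < minkowski p₁ p₂) :
    ∃ Δ : Fin 4 → ℝ, minkowski Δ Δ = 0 ∧ minkowski Δ (p₁ - p₂) = 0 ∧
      minkowski Δ p₁ ≠ 0 := by
  set m := minkowski p₁ p₂ with hm
  have hm' : minkowski p₁ p₂ = m := rfl
  have ht : 0 < p₁ 0 * p₂ 0 := by
    simp only [minkowski] at h₁ h₂ h₁₂ hm
    nlinarith [sq_nonneg (p₁ 1 * p₂ 2 - p₁ 2 * p₂ 1), sq_nonneg (p₁ 1 * p₂ 3 - p₁ 3 * p₂ 1),
      sq_nonneg (p₁ 2 * p₂ 3 - p₁ 3 * p₂ 2), sq_nonneg (p₁ 0 * p₂ 0 + p₁ 1 * p₂ 1 + p₁ 2 * p₂ 2 + p₁ 3 * p₂ 3),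
      mul_pos h₁₂ h₁₂, h₁₂]
  have hsum : 0 < (m + 2 * p₁ 1 * p₂ 1) + ((m + 2 * p₁ 2 * p₂ 2) + (m + 2 * p₁ 3 * p₂ 3)) := by
    simp only [minkowski] at hm
    nlinarith [ht, h₁₂]
  have build : ∀ (n : Fin 4 → ℝ) (a b : ℝ), minkowski n p₁ = -a → minkowski n p₂ = -b →
      minkowski n n = -1 → 0 < m + 2 * a * b →
      ∃ Δ : Fin 4 → ℝ, minkowski Δ Δ = 0 ∧ minkowski Δ (p₁ - p₂) = 0 ∧
        minkowski Δ p₁ ≠ 0 := by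
    intro n a b ha hb hn hpos
    refine helper p₁ p₂ n a b m (Real.sqrt (2 * m ^ 2 / (m + 2 * a * b)))
      h₁ h₂ hm' ha hb hn ?_ h₁₂
    rw [Real.sq_sqrt (by positivity)]
    field_simp
  by_cases c1 : 0 < m + 2 * p₁ 1 * p₂ 1
  · exact build ![0, 1, 0, 0] (p₁ 1) (p₂ 1) (by simp [minkowski]) (by simp [minkowski])
      (by norm_num [minkowski, Matrix.cons_val_two, Matrix.cons_val_three]) c1
  · by_cases c2 : 0 < m + 2 * p₁ 2 * p₂ 2
    · exact build ![0, 0, 1, 0] (p₁ 2) (p₂ 2) (by simp [minkowski]) (by simp [minkowski])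
        (by norm_num [minkowski, Matrix.cons_val_two, Matrix.cons_val_three]) c2
    · exact build ![0, 0, 0, 1] (p₁ 3) (p₂ 3) (by simp [minkowski]) (by simp [minkowski])
        (by norm_num [minkowski, Matrix.cons_val_two, Matrix.cons_val_three]) (by push_neg at c1 c2; linarith)
end

section
/- Let n ≥ 1 be an integer, let p ∈ ℝⁿ be nonzero, and let a, b be real numbers with 0 < a < n/2, 0 < b < n/2 and a + b > n/2. Then ∫_{ℝⁿ} ‖k‖^{−2a} ‖k + p‖^{−2b} dk = π^{n/2} ‖p‖^{n − 2a − 2b} · Γ(a + b − n/2) Γ(n/2 − a) Γ(n/2 − b) / ( Γ(a) Γ(b) Γ(n − a − b) ). -/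
open MeasureTheory Real

section helpers

open Set ENNReal


lemma aux_integrableOn {c r : ℝ} (hc : 0 < c) (hr : 0 < r) :
    IntegrableOn (fun t : ℝ => t ^ (c - 1) * rexp (-(r * t))) (Ioi 0) := by
  have h := integrableOn_rpow_mul_exp_neg_mul_rpow (p := 1) (s := c - 1) (b := r)
    (by linarith) one_pos hr
  refine h.congr_fun (fun t ht => ?_) measurableSet_Ioi
  dsimp only
  rw [Real.rpow_one, neg_mul]

lemma aux_lintegral_gamma {c r : ℝ} (hc : 0 < c) (hr : 0 < r) :
    ∫⁻ t in Ioi 0, ENNReal.ofReal (t ^ (c - 1) * rexp (-(r * t))) =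
      ENNReal.ofReal (r ^ (-c) * Gamma c) := by
  rw [← ofReal_integral_eq_lintegral_ofReal (aux_integrableOn hc hr)]
  · rw [integral_rpow_mul_exp_neg_mul_Ioi hc hr]
    congr 1
    rw [one_div, Real.inv_rpow hr.le, ← Real.rpow_neg hr.le]
  · filter_upwards [self_mem_ae_restrict measurableSet_Ioi] with t ht
    have : (0:ℝ) < t := ht
    positivity

lemma aux_lintegral_comp_mul {c : ℝ} (hc : 0 < c) (f : ℝ → ℝ≥0∞) :
    ∫⁻ t in Ioi 0, f t = ENNReal.ofReal c * ∫⁻ u in Ioi 0, f (c * u) := by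
  let e : ℝ ≃ᵐ ℝ := (Homeomorph.mulLeft₀ c hc.ne').toMeasurableEquiv
  have hmap : Measure.map (fun x : ℝ => c * x) volume
      = ENNReal.ofReal c⁻¹ • volume := by
    rw [Real.map_volume_mul_left hc.ne', abs_of_pos (inv_pos.mpr hc)]
  have key : ∀ g : ℝ → ℝ≥0∞, ∫⁻ x, g (c * x) = ENNReal.ofReal c⁻¹ * ∫⁻ x, g x := by
    intro g
    have := lintegral_map_equiv (μ := volume) g e
    have he : Measure.map (⇑e) volume = ENNReal.ofReal c⁻¹ • volume := by
      rw [show ⇑e = (fun x : ℝ => c * x) from rfl, hmap]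
    rw [he, lintegral_smul_measure] at this
    exact this.symm
  have hind : ∀ x : ℝ, (Ioi (0:ℝ)).indicator f (c * x)
      = (Ioi (0:ℝ)).indicator (fun x => f (c * x)) x := by
    intro x
    by_cases hx : x ∈ Ioi (0:ℝ)
    · rw [indicator_of_mem hx, indicator_of_mem (by exact mul_pos hc hx)]
    · rw [indicator_of_notMem hx, indicator_of_notMem (by
        simpa [mul_pos_iff_of_pos_left, hc] using hx)]
  rw [← lintegral_indicator measurableSet_Ioi, ← lintegral_indicator measurableSet_Ioi]
  have := key ((Ioi (0:ℝ)).indicator f)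
  simp_rw [hind] at this
  rw [this, ← mul_assoc, ← ENNReal.ofReal_mul hc.le, mul_inv_cancel₀ hc.ne',
    ENNReal.ofReal_one, one_mul]

lemma aux_beta_Ioi {x y : ℝ} (hx : 0 < x) (hy : 0 < y) :
    ∫⁻ u in Ioi 0, ENNReal.ofReal (u ^ (x - 1) * (1 + u) ^ (-(x + y))) =
      ENNReal.ofReal (Gamma x * Gamma y / Gamma (x + y)) := by
  have hG : 0 < Gamma (x + y) := Gamma_pos_of_pos (by linarith)
  have key : (∫⁻ u in Ioi 0, ENNReal.ofReal (u ^ (x - 1) * (1 + u) ^ (-(x + y)))) *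
      ENNReal.ofReal (Gamma (x + y)) = ENNReal.ofReal (Gamma x * Gamma y) := by
    rw [← lintegral_mul_const' _ _ ofReal_ne_top]
    have step1 : ∀ u ∈ Ioi (0:ℝ),
        ENNReal.ofReal (u ^ (x - 1) * (1 + u) ^ (-(x + y))) * ENNReal.ofReal (Gamma (x + y)) =
        ∫⁻ s in Ioi 0, ENNReal.ofReal (u ^ (x - 1)) *
          ENNReal.ofReal (s ^ (x + y - 1) * rexp (-((1 + u) * s))) := by
      intro u hu
      have hu' : (0:ℝ) < u := hu
      rw [lintegral_const_mul' _ _ ofReal_ne_top, aux_lintegral_gamma (by linarith) (by linarith),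
        ← ENNReal.ofReal_mul (by positivity), ← ENNReal.ofReal_mul (by positivity), mul_assoc]
    rw [setLIntegral_congr_fun measurableSet_Ioi step1]
    have swap := lintegral_lintegral_swap (μ := volume.restrict (Ioi 0))
      (ν := volume.restrict (Ioi 0))
      (f := fun u s => ENNReal.ofReal (u ^ (x - 1)) *
        ENNReal.ofReal (s ^ (x + y - 1) * rexp (-((1 + u) * s))))
      (by apply Measurable.aemeasurable; fun_prop)
    rw [swap]
    have step2 : ∀ s ∈ Ioi (0:ℝ),
        (∫⁻ u in Ioi 0, ENNReal.ofReal (u ^ (x - 1)) *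
          ENNReal.ofReal (s ^ (x + y - 1) * rexp (-((1 + u) * s)))) =
        ENNReal.ofReal (Gamma x) * ENNReal.ofReal (s ^ (y - 1) * rexp (-(1 * s))) := by
      intro s hs
      have hs' : (0:ℝ) < s := hs
      have ptw : ∀ u ∈ Ioi (0:ℝ),
          ENNReal.ofReal (u ^ (x - 1)) *
            ENNReal.ofReal (s ^ (x + y - 1) * rexp (-((1 + u) * s))) =
          ENNReal.ofReal (s ^ (x + y - 1) * rexp (-s)) *
            ENNReal.ofReal (u ^ (x - 1) * rexp (-(s * u))) := by
        intro u hu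
        have hu' : (0:ℝ) < u := hu
        rw [← ENNReal.ofReal_mul (by positivity), ← ENNReal.ofReal_mul (by positivity)]
        congr 1
        have : -((1 + u) * s) = -s + -(s * u) := by ring
        rw [this, Real.exp_add]
        ring
      rw [setLIntegral_congr_fun measurableSet_Ioi ptw,
        lintegral_const_mul' _ _ ofReal_ne_top, aux_lintegral_gamma hx hs',
        ← ENNReal.ofReal_mul (by positivity)]
      rw [show s ^ (x + y - 1) * rexp (-s) * (s ^ (-x) * Gamma x)
          = Gamma x * (s ^ (x + y - 1) * s ^ (-x) * rexp (-s)) by ring,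
        ← Real.rpow_add hs']
      rw [show x + y - 1 + -x = y - 1 by ring]
      rw [one_mul, ← ENNReal.ofReal_mul (Gamma_pos_of_pos hx).le]
    rw [setLIntegral_congr_fun measurableSet_Ioi step2,
      lintegral_const_mul' _ _ ofReal_ne_top, aux_lintegral_gamma hy one_pos,
      ← ENNReal.ofReal_mul (Gamma_pos_of_pos hx).le, Real.one_rpow, one_mul]
  have h2 : ENNReal.ofReal (Gamma x * Gamma y / Gamma (x + y)) *
      ENNReal.ofReal (Gamma (x + y)) = ENNReal.ofReal (Gamma x * Gamma y) := by
    rw [← ENNReal.ofReal_mul (by positivity), div_mul_cancel₀ _ hG.ne']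
  have := key.trans h2.symm
  exact (ENNReal.mul_left_inj (by simp [hG]) ofReal_ne_top).mp this

variable {V : Type*} [NormedAddCommGroup V] [InnerProductSpace ℝ V] [FiniteDimensional ℝ V]
  [MeasurableSpace V] [BorelSpace V]

lemma aux_integrable_gaussian {b : ℝ} (hb : 0 < b) :
    Integrable (fun v : V => rexp (-b * ‖v‖ ^ 2)) := by
  have h := (GaussianFourier.integrable_cexp_neg_mul_sq_norm_add (V := V)
    (b := (b : ℂ)) (by simpa using hb) 0 0).norm
  refine h.congr (Filter.Eventually.of_forall fun v => ?_)
  simp [Complex.norm_exp]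
  left; norm_cast

lemma aux_lintegral_gaussian {b : ℝ} (hb : 0 < b) (w : V) :
    ∫⁻ v : V, ENNReal.ofReal (rexp (-b * ‖v + w‖ ^ 2)) =
      ENNReal.ofReal ((π / b) ^ ((Module.finrank ℝ V : ℝ) / 2)) := by
  have h1 : ∫⁻ v : V, ENNReal.ofReal (rexp (-b * ‖v + w‖ ^ 2)) =
      ∫⁻ v : V, ENNReal.ofReal (rexp (-b * ‖v‖ ^ 2)) :=
    lintegral_add_right_eq_self (fun v => ENNReal.ofReal (rexp (-b * ‖v‖ ^ 2))) w
  rw [h1, ← ofReal_integral_eq_lintegral_ofReal (aux_integrable_gaussian hb)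
    (Filter.Eventually.of_forall fun v => (exp_pos _).le),
    GaussianFourier.integral_rexp_neg_mul_sq_norm hb]

end helpers

open Set ENNReal in
/-- For `n ≥ 1`, `p ∈ ℝⁿ` nonzero, and real `a, b` with
`0 < a < n/2`, `0 < b < n/2`, `a + b > n/2`,
`∫_{ℝⁿ} ‖k‖^{−2a} ‖k + p‖^{−2b} dk
  = π^{n/2} ‖p‖^{n−2a−2b} Γ(a+b−n/2) Γ(n/2−a) Γ(n/2−b) / (Γ(a) Γ(b) Γ(n−a−b))`. -/
theorem one_loop_two_point_integral_eval (n : ℕ) (hn : 1 ≤ n)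
    (p : EuclideanSpace ℝ (Fin n)) (hp : p ≠ 0)
    (a b : ℝ) (ha0 : 0 < a) (ha : a < n / 2) (hb0 : 0 < b) (hb : b < n / 2)
    (hab : a + b > n / 2) :
    ∫ k : EuclideanSpace ℝ (Fin n), ‖k‖ ^ (-(2 * a)) * ‖k + p‖ ^ (-(2 * b)) =
      π ^ ((n : ℝ) / 2) * ‖p‖ ^ ((n : ℝ) - 2 * a - 2 * b) *
        (Gamma (a + b - n / 2) * Gamma (n / 2 - a) * Gamma (n / 2 - b)) /
        (Gamma a * Gamma b * Gamma ((n : ℝ) - a - b)) := by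
  haveI : Nontrivial (EuclideanSpace ℝ (Fin n)) := ⟨p, 0, hp⟩
  set ν : ℝ := (n : ℝ) / 2 with hν
  have hp0 : (0:ℝ) < ‖p‖ := norm_pos_iff.mpr hp
  have hP : (0:ℝ) < ‖p‖ ^ 2 := by positivity
  set P : ℝ := ‖p‖ ^ 2 with hPdef
  have hc0 : 0 < a + b - ν := by simpa [hν] using sub_pos.mpr hab
  have hx0 : 0 < ν - a := sub_pos.mpr ha
  have hy0 : 0 < ν - b := sub_pos.mpr hb
  have hGa : 0 < Gamma a := Gamma_pos_of_pos ha0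
  have hGb : 0 < Gamma b := Gamma_pos_of_pos hb0
  have hGc : 0 < Gamma (a + b - ν) := Gamma_pos_of_pos hc0
  have hGx : 0 < Gamma (ν - a) := Gamma_pos_of_pos hx0
  have hGy : 0 < Gamma (ν - b) := Gamma_pos_of_pos hy0
  have hGxy : 0 < Gamma ((n:ℝ) - a - b) := Gamma_pos_of_pos (by simp only [hν] at *; linarith)
  -- the integrand
  set A : EuclideanSpace ℝ (Fin n) → ℝ := fun k => ‖k‖ ^ (-(2 * a)) * ‖k + p‖ ^ (-(2 * b)) with hA
  have hAmeas : Measurable A := by fun_prop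
  have hA0 : ∀ k, 0 ≤ A k := fun k =>
    mul_nonneg (Real.rpow_nonneg (norm_nonneg _) _) (Real.rpow_nonneg (norm_nonneg _) _)
  -- the Schwinger parametrized integrand
  set F : EuclideanSpace ℝ (Fin n) → ℝ → ℝ → ℝ≥0∞ := fun k s t =>
    ENNReal.ofReal (s ^ (a - 1) * rexp (-(‖k‖ ^ 2 * s))) *
      ENNReal.ofReal (t ^ (b - 1) * rexp (-(‖k + p‖ ^ 2 * t))) with hF
  -- final value
  set C : ℝ := π ^ ν * ‖p‖ ^ ((n : ℝ) - 2 * a - 2 * b) *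
      (Gamma (a + b - ν) * Gamma (ν - a) * Gamma (ν - b)) /
      (Gamma a * Gamma b * Gamma ((n:ℝ) - a - b)) with hC
  have hCpos : 0 < C := by
    apply div_pos
    · have := pi_pos; positivity
    · positivity
  have key : ∫⁻ k : EuclideanSpace ℝ (Fin n), ENNReal.ofReal (A k) = ENNReal.ofReal C := by
    -- the parametrized double integrand after the Gaussian integration
    set G : ℝ → ℝ → ℝ≥0∞ := fun s t =>
      ENNReal.ofReal (s ^ (a - 1) * t ^ (b - 1) *
        ((π / (s + t)) ^ ν * rexp (-(s * t / (s + t) * P)))) with hG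
    set H : ℝ → ℝ → ℝ≥0∞ := fun s u =>
      ENNReal.ofReal ((π ^ ν * (u ^ (b - 1) * (1 + u) ^ (-ν))) *
        (s ^ ((a + b - ν) - 1) * rexp (-((u / (1 + u) * P) * s)))) with hH
    -- Step 1: a.e. pointwise Schwinger parametrization
    have step1 : ∀ᵐ k : EuclideanSpace ℝ (Fin n),
        ENNReal.ofReal (Gamma a * Gamma b) * ENNReal.ofReal (A k) =
          ∫⁻ s in Ioi 0, ∫⁻ t in Ioi 0, F k s t := by
      have hae : ∀ᵐ k : EuclideanSpace ℝ (Fin n), k ∉ ({0, -p} : Set (EuclideanSpace ℝ (Fin n))) := by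
        rw [← MeasureTheory.measure_eq_zero_iff_ae_notMem]
        refine le_antisymm ?_ zero_le
        rw [Set.insert_eq]
        refine le_trans (measure_union_le _ _) ?_
        simp [measure_singleton]
      filter_upwards [hae] with k hk
      simp only [mem_insert_iff, mem_singleton_iff, not_or] at hk
      have hk0 : (0:ℝ) < ‖k‖ ^ 2 := by
        have h := norm_pos_iff.mpr hk.1
        positivity
      have hkp : (0:ℝ) < ‖k + p‖ ^ 2 := by
        have h : k + p ≠ 0 := fun h => hk.2 (eq_neg_of_add_eq_zero_left h)
        have h' := norm_pos_iff.mpr h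
        positivity
      have g1 : ∫⁻ s in Ioi 0, ENNReal.ofReal (s ^ (a - 1) * rexp (-(‖k‖ ^ 2 * s))) =
          ENNReal.ofReal (‖k‖ ^ (-(2 * a)) * Gamma a) := by
        rw [aux_lintegral_gamma ha0 hk0]
        congr 2
        rw [← Real.rpow_natCast ‖k‖ 2, ← Real.rpow_mul (norm_nonneg _)]
        norm_num
      have g2 : ∫⁻ t in Ioi 0, ENNReal.ofReal (t ^ (b - 1) * rexp (-(‖k + p‖ ^ 2 * t))) =
          ENNReal.ofReal (‖k + p‖ ^ (-(2 * b)) * Gamma b) := by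
        rw [aux_lintegral_gamma hb0 hkp]
        congr 2
        rw [← Real.rpow_natCast ‖k + p‖ 2, ← Real.rpow_mul (norm_nonneg _)]
        norm_num
      have inner_t : ∀ s : ℝ, ∫⁻ t in Ioi 0, F k s t =
          ENNReal.ofReal (s ^ (a - 1) * rexp (-(‖k‖ ^ 2 * s))) *
            ENNReal.ofReal (‖k + p‖ ^ (-(2 * b)) * Gamma b) := by
        intro s
        rw [← g2]
        exact lintegral_const_mul' _ _ ofReal_ne_top
      rw [lintegral_congr fun s => inner_t s,
        lintegral_mul_const _ (by fun_prop), g1,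
        ← ENNReal.ofReal_mul (by positivity), ← ENNReal.ofReal_mul (by positivity)]
      congr 1
      simp only [hA]
      ring
    -- Step 2: Tonelli swaps to put the `k` integral innermost
    have hFm : Measurable (fun q : (EuclideanSpace ℝ (Fin n) × ℝ) × ℝ => F q.1.1 q.1.2 q.2) := by
      simp only [hF]
      fun_prop
    have swap1 : ∫⁻ k : EuclideanSpace ℝ (Fin n), ∫⁻ s in Ioi 0, ∫⁻ t in Ioi 0, F k s t =
        ∫⁻ s in Ioi 0, ∫⁻ k : EuclideanSpace ℝ (Fin n), ∫⁻ t in Ioi 0, F k s t := by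
      refine lintegral_lintegral_swap ?_
      refine Measurable.aemeasurable ?_
      refine Measurable.lintegral_prod_right (f := fun q : EuclideanSpace ℝ (Fin n) × ℝ =>
        fun t => F q.1 q.2 t) ?_
      exact hFm
    have swap2 : ∀ s : ℝ, ∫⁻ k : EuclideanSpace ℝ (Fin n), ∫⁻ t in Ioi 0, F k s t =
        ∫⁻ t in Ioi 0, ∫⁻ k : EuclideanSpace ℝ (Fin n), F k s t := by
      intro s
      refine lintegral_lintegral_swap ?_
      refine Measurable.aemeasurable ?_
      simp only [hF]
      fun_prop
    -- Step 3: Gaussian integration over k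
    have step3 : ∀ s ∈ Ioi (0:ℝ), ∀ t ∈ Ioi (0:ℝ),
        ∫⁻ k : EuclideanSpace ℝ (Fin n), F k s t = G s t := by
      intro s hs t ht
      have hs' : (0:ℝ) < s := hs
      have ht' : (0:ℝ) < t := ht
      have hst : (0:ℝ) < s + t := by linarith
      have ptw : ∀ k : EuclideanSpace ℝ (Fin n), F k s t =
          ENNReal.ofReal (s ^ (a - 1) * t ^ (b - 1) * rexp (-(s * t / (s + t) * P))) *
            ENNReal.ofReal (rexp (-(s + t) * ‖k + (t / (s + t)) • p‖ ^ 2)) := by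
        intro k
        simp only [hF]
        rw [← ENNReal.ofReal_mul (by positivity), ← ENNReal.ofReal_mul (by positivity)]
        congr 1
        have eexp : -(‖k‖ ^ 2 * s) + -(‖k + p‖ ^ 2 * t) =
            -(s * t / (s + t) * P) + -(s + t) * ‖k + (t / (s + t)) • p‖ ^ 2 := ?_
        · calc s ^ (a - 1) * rexp (-(‖k‖ ^ 2 * s)) * (t ^ (b - 1) * rexp (-(‖k + p‖ ^ 2 * t)))
              = s ^ (a - 1) * t ^ (b - 1) * rexp (-(‖k‖ ^ 2 * s) + -(‖k + p‖ ^ 2 * t)) := by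
                rw [Real.exp_add]; ring
            _ = _ := by rw [eexp, Real.exp_add]; ring
        have e1 : ‖k + p‖ ^ 2 = ‖k‖ ^ 2 + 2 * (inner ℝ k p : ℝ) + ‖p‖ ^ 2 :=
          norm_add_sq_real k p
        have e2 : ‖k + (t / (s + t)) • p‖ ^ 2 =
            ‖k‖ ^ 2 + 2 * ((t / (s + t)) * (inner ℝ k p : ℝ)) + (t / (s + t)) ^ 2 * ‖p‖ ^ 2 := by
          rw [norm_add_sq_real k ((t / (s + t)) • p), real_inner_smul_right, norm_smul]
          rw [mul_pow, Real.norm_eq_abs, sq_abs]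
        rw [e1, e2, hPdef]
        field_simp
        ring
      rw [lintegral_congr ptw, lintegral_const_mul' _ _ ofReal_ne_top,
        aux_lintegral_gaussian hst ((t / (s + t)) • p), hG]
      simp only [finrank_euclideanSpace_fin]
      rw [← ENNReal.ofReal_mul (by positivity)]
      congr 1
      rw [hν]
      ring
    -- Step 4: substitution t = s * u
    have step4 : ∀ s ∈ Ioi (0:ℝ),
        ∫⁻ t in Ioi 0, G s t = ∫⁻ u in Ioi 0, H s u := by
      intro s hs
      have hs' : (0:ℝ) < s := hs
      rw [aux_lintegral_comp_mul hs' (G s), ← lintegral_const_mul' _ _ ofReal_ne_top]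
      refine setLIntegral_congr_fun measurableSet_Ioi ?_
      intro u hu
      have hu' : (0:ℝ) < u := hu
      have h1u : (0:ℝ) < 1 + u := by linarith
      simp only [hG, hH]
      rw [← ENNReal.ofReal_mul hs'.le]
      congr 1
      have e1 : (s * u) ^ (b - 1) = s ^ (b - 1) * u ^ (b - 1) :=
        Real.mul_rpow hs'.le hu'.le
      have e2 : s + s * u = s * (1 + u) := by ring
      have e3 : (π / (s * (1 + u))) ^ ν = π ^ ν * (s ^ ν)⁻¹ * ((1 + u) ^ ν)⁻¹ := by
        rw [Real.div_rpow pi_pos.le (by positivity), Real.mul_rpow hs'.le h1u.le]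
        field_simp
      have e4 : s * (s * u) / (s + s * u) * P = u / (1 + u) * P * s := by
        rw [e2]; field_simp
      have e5 : s * (s ^ (a - 1) * (s ^ (b - 1) * (s ^ ν)⁻¹)) = s ^ (a + b - ν - 1) := by
        rw [← Real.rpow_neg hs'.le, ← Real.rpow_add hs', ← Real.rpow_add hs']
        nth_rewrite 1 [← Real.rpow_one s]
        rw [← Real.rpow_add hs']
        congr 1
        ring
      have e6 : (1 + u) ^ (-ν) = ((1 + u) ^ ν)⁻¹ := Real.rpow_neg h1u.le ν
      rw [e1, e4, e2, e3, e6, ← e5]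
      ring
    -- Step 5: swap s and u
    have swap3 : ∫⁻ s in Ioi 0, ∫⁻ u in Ioi 0, H s u =
        ∫⁻ u in Ioi 0, ∫⁻ s in Ioi 0, H s u := by
      refine lintegral_lintegral_swap ?_
      refine Measurable.aemeasurable ?_
      simp only [hH]
      fun_prop
    -- Step 6: the s integral
    have step6 : ∀ u ∈ Ioi (0:ℝ), ∫⁻ s in Ioi 0, H s u =
        ENNReal.ofReal (π ^ ν * Gamma (a + b - ν) * P ^ (-(a + b - ν))) *
          ENNReal.ofReal (u ^ ((ν - a) - 1) * (1 + u) ^ (-((ν - a) + (ν - b)))) := by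
      intro u hu
      have hu' : (0:ℝ) < u := hu
      have h1u : (0:ℝ) < 1 + u := by linarith
      have hr : (0:ℝ) < u / (1 + u) * P := by positivity
      simp only [hH]
      have split : ∀ s ∈ Ioi (0:ℝ),
          ENNReal.ofReal (π ^ ν * (u ^ (b - 1) * (1 + u) ^ (-ν)) *
            (s ^ (a + b - ν - 1) * rexp (-(u / (1 + u) * P * s)))) =
          ENNReal.ofReal (π ^ ν * (u ^ (b - 1) * (1 + u) ^ (-ν))) *
            ENNReal.ofReal (s ^ (a + b - ν - 1) * rexp (-(u / (1 + u) * P * s))) := by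
        intro s hs
        rw [← ENNReal.ofReal_mul (by positivity)]
      rw [setLIntegral_congr_fun measurableSet_Ioi split,
        lintegral_const_mul' _ _ ofReal_ne_top, aux_lintegral_gamma hc0 hr,
        ← ENNReal.ofReal_mul (by positivity), ← ENNReal.ofReal_mul (by positivity)]
      congr 1
      have e1 : (u / (1 + u) * P) ^ (-(a + b - ν)) =
          u ^ (-(a + b - ν)) * ((1 + u) ^ (-(a + b - ν)))⁻¹ * P ^ (-(a + b - ν)) := by
        rw [Real.mul_rpow (by positivity) hP.le, Real.div_rpow hu'.le h1u.le]
        field_simp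
      have e2 : u ^ (b - 1) * u ^ (-(a + b - ν)) = u ^ ((ν - a) - 1) := by
        rw [← Real.rpow_add hu']
        congr 1
        ring
      have e3 : (1 + u) ^ (-ν) * ((1 + u) ^ (-(a + b - ν)))⁻¹ =
          (1 + u) ^ (-((ν - a) + (ν - b))) := by
        rw [← Real.rpow_neg h1u.le, ← Real.rpow_add h1u]
        congr 1
        ring
      rw [e1, ← e2, ← e3]
      ring
    -- Step 7: the u integral (Beta)
    have step7 : ∫⁻ u in Ioi 0, ENNReal.ofReal
        (u ^ ((ν - a) - 1) * (1 + u) ^ (-((ν - a) + (ν - b)))) =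
        ENNReal.ofReal (Gamma (ν - a) * Gamma (ν - b) / Gamma ((n:ℝ) - a - b)) := by
      rw [aux_beta_Ioi hx0 hy0]
      congr 2
      rw [hν]; ring
    -- assemble
    have hmul : ENNReal.ofReal (Gamma a * Gamma b) *
        ∫⁻ k : EuclideanSpace ℝ (Fin n), ENNReal.ofReal (A k) =
        ENNReal.ofReal (Gamma a * Gamma b * C) := by
      rw [← lintegral_const_mul' _ _ ofReal_ne_top, lintegral_congr_ae step1, swap1]
      rw [lintegral_congr fun s => swap2 s]
      rw [setLIntegral_congr_fun measurableSet_Ioi (fun s hs => setLIntegral_congr_fun measurableSet_Ioi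
          (fun t ht => step3 s hs t ht))]
      rw [setLIntegral_congr_fun measurableSet_Ioi step4, swap3]
      rw [setLIntegral_congr_fun measurableSet_Ioi step6]
      rw [lintegral_const_mul' _ _ ofReal_ne_top, step7,
        ← ENNReal.ofReal_mul (by positivity)]
      congr 1
      have ePa : P ^ (-(a + b - ν)) = ‖p‖ ^ ((n:ℝ) - 2 * a - 2 * b) := by
        rw [hPdef, ← Real.rpow_natCast ‖p‖ 2, ← Real.rpow_mul (norm_nonneg _)]
        congr 1
        rw [hν]; push_cast; ring
      rw [ePa, hC]
      field_simp
    have h2 : ENNReal.ofReal (Gamma a * Gamma b) * ENNReal.ofReal C =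
        ENNReal.ofReal (Gamma a * Gamma b * C) := by
      rw [← ENNReal.ofReal_mul (by positivity)]
    exact (ENNReal.mul_right_inj (by positivity) ofReal_ne_top).mp (hmul.trans h2.symm)
  rw [integral_eq_lintegral_of_nonneg_ae (Filter.Eventually.of_forall hA0)
    hAmeas.aestronglyMeasurable]
  show (∫⁻ k : EuclideanSpace ℝ (Fin n), ENNReal.ofReal (A k)).toReal = _
  rw [key, ENNReal.toReal_ofReal hCpos.le, hC]
end
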